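/- arXiv:1903.07985 — 3 statements merged into one kernel-verified Lean document; each statement's English description precedes it below -/
import Mathlib

section
/- Every torsion-free abelian group admits a linear order making it a linearly ordered abelian group (Levi's theorem). -/
/-- Levi's theorem: every torsion-free abelian group admits a compatible linear order. -/
theorem levi_torsion_free_orderable (G : Type*) [CommGroup G]
    (htf : ∀ g : G, ∀ n : ℕ, 0 < n → g ^ n = 1 → g = 1) :
    ∃ le : G → G → Prop, IsLinearOrder G le ∧ ∀ a b c : G, le a b → le (a * c) (b * c) := by
  classical
  let A := Additive G
  haveI : NoZeroSMulDivisors ℤ A := by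
    refine ⟨fun {n a} h => ?_⟩
    by_contra hc
    push_neg at hc
    obtain ⟨hn, ha⟩ := hc
    have hnat : (n.natAbs) • a = 0 := by
      rcases Int.natAbs_eq n with he | he
      · rw [← natCast_zsmul, ← he, h]
      · rw [← natCast_zsmul, ← neg_neg ((n.natAbs : ℤ)), ← he, neg_zsmul, h, neg_zero]
    exact ha (htf (Additive.toMul a) n.natAbs (Int.natAbs_pos.mpr hn)
      (by rw [← toMul_nsmul, hnat]; rfl))
  -- localize at ℤ⁰ to get a ℚ-vector space
  let V := LocalizedModule (nonZeroDivisors ℤ) A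
  let f : A → V := fun a => LocalizedModule.mk a 1
  have hfadd : ∀ x y : A, f (x + y) = f x + f y := by
    intro x y
    rw [show f x + f y = LocalizedModule.mk x 1 + LocalizedModule.mk y 1 from rfl,
      LocalizedModule.mk_add_mk]
    simp
    rfl
  have hf : Function.Injective f := by
    intro x y hxy
    rw [LocalizedModule.mk_eq] at hxy
    obtain ⟨u, hu⟩ := hxy
    simp only [one_smul] at hu
    have hu' : (u : ℤ) • x = (u : ℤ) • y := hu
    have : (u : ℤ) • (x - y) = 0 := by rw [smul_sub, hu', sub_self]
    rcases smul_eq_zero.mp this with h | h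
    · exact absurd h (nonZeroDivisors.coe_ne_zero u)
    · exact sub_eq_zero.mp h
  -- ℚ-module structure on V
  let e : ℚ ≃ₐ[ℤ] Localization (nonZeroDivisors ℤ) :=
    IsLocalization.algEquiv (nonZeroDivisors ℤ) ℚ (Localization (nonZeroDivisors ℤ))
  letI : Module ℚ V := Module.compHom V e.toAlgHom.toRingHom
  -- basis and lex order
  let b := Module.Basis.ofVectorSpace ℚ V
  let ι := Module.Basis.ofVectorSpaceIndex ℚ V
  letI : LinearOrder ι := IsWellOrder.linearOrder WellOrderingRel
  let T := Lex (ι →₀ ℚ)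
  let F : G → T := fun g => toLex (b.repr (f (Additive.ofMul g)))
  have hFinj : Function.Injective F := by
    intro x y hxy
    apply hf
    exact b.repr.injective (toLex.injective hxy)
  have hFmul : ∀ x y : G, F (x * y) = F x + F y := by
    intro x y
    show toLex (b.repr (f (Additive.ofMul x + Additive.ofMul y))) = _
    rw [hfadd, map_add]
    rfl
  refine ⟨fun a b => F a ≤ F b, ?_, ?_⟩
  · haveI : IsRefl G (fun a b => F a ≤ F b) := ⟨fun a => le_refl _⟩
    haveI : IsTrans G (fun a b => F a ≤ F b) := ⟨fun a b c => le_trans⟩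
    haveI : IsAntisymm G (fun a b => F a ≤ F b) := ⟨fun a b h1 h2 => hFinj (le_antisymm h1 h2)⟩
    haveI : IsPreorder G (fun a b => F a ≤ F b) := ⟨⟩
    haveI : IsPartialOrder G (fun a b => F a ≤ F b) := ⟨⟩
    haveI : IsTotal G (fun a b => F a ≤ F b) := ⟨fun a b => le_total _ _⟩
    exact ⟨⟩
  intro a b c h
  show F (a * c) ≤ F (b * c)
  rw [hFmul, hFmul]
  exact add_le_add_left h _
end

section
/- A reciprocal n×n matrix M over a multiplicative group (i.e., M[j][i] = M[i][j]⁻¹ and M[i][i] = 1) is consistent (M[i][k]·M[k][j] = M[i][j] for all i,j,k) if and only if there exists a vector v with M[i][j] = v[i]·v[j]⁻¹ for all i,j. -/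
/-- A reciprocal matrix over an abelian group is consistent iff it is generated by a
vector of weights. -/
theorem consistent_iff_generated {G : Type*} [CommGroup G] {n : ℕ}
    (M : Fin n → Fin n → G)
    (hrec : ∀ i j, M j i = (M i j)⁻¹) (hdiag : ∀ i, M i i = 1) :
    (∀ i j k, M i k * M k j = M i j) ↔
      ∃ v : Fin n → G, ∀ i j, M i j = v i * (v j)⁻¹ := by
  constructor
  · intro h
    rcases Nat.eq_zero_or_pos n with hn | hn
    · exact ⟨fun i => 1, fun i => absurd i.isLt (by omega)⟩
    · refine ⟨fun i => M i ⟨0, hn⟩, fun i j => ?_⟩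
      rw [← hrec, ← h i j ⟨0, hn⟩]
  · rintro ⟨v, hv⟩ i j k
    simp [hv, mul_assoc]
end

section
/- For the matrix M₂ with rows [1, i, 1], [-i, 1, -i], [1, i, 1], every choice of row geometric means (v₀, v₁, v₂) with v₀³ = i, v₁³ = -1, v₂³ = i fails to reconstruct M₂ as a real-ratio matrix: for every such choice the ratio v₀/v₁ is not a positive real number. -/
open Complex in
/-- No choice of row geometric means for `M₂` reconstructs it with a positive
real ratio `v₀/v₁`. -/
theorem M2_geometric_means_not_real :
    ∀ v₀ v₁ : ℂ, v₀ ^ 3 = I → v₁ ^ 3 = -1 →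
      ¬ ∃ r : ℝ, 0 < r ∧ v₀ / v₁ = (r : ℂ) := by
  rintro v₀ v₁ h₀ h₁ ⟨r, hr, hv⟩
  have hv₁ : v₁ ≠ 0 := by
    intro h; rw [h] at h₁; simp at h₁
  have h3 : ((r : ℂ)) ^ 3 = -I := by
    rw [← hv, div_pow, h₀, h₁]
    field_simp
  have := congrArg Complex.im h3
  simp [← Complex.ofReal_pow] at this
end
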